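/- Let Y(ξ,η,ζ) = Y₁ ∧ Y₂ with Y₁ = (η+ζ)e₁ + e₄ + ξe₃, Y₂ = −ξe₁ + e₂ + (η−ζ)e₃. Then Y(ξ,η,ζ) ∧ Y(ξ+dξ, η+dη, ζ+dζ) = ((dη)² + (dξ)² − (dζ)²) e₁∧e₂∧e₃∧e₄. Consequently, the two Lagrangian planes corresponding to (ξ,η,ζ) and (ξ+dξ, η+dη, ζ+dζ) intersect in a line if and only if (dξ)² + (dη)² − (dζ)² = 0. -/

import Mathlib

/- V = ℝ⁴ with standard basis e₁, e₂, e₃, e₄ (indexed here by 0, 1, 2, 3). -/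
abbrev V4 : Type := Fin 4 → ℝ

/-- the standard basis vector eᵢ (i = 0,...,3 stands for e₁,...,e₄) -/
noncomputable def e (i : Fin 4) : V4 := Pi.single i 1

/-- wedge of two vectors in the exterior algebra of ℝ⁴ -/
noncomputable def w (v w : V4) : ExteriorAlgebra ℝ V4 :=
  ExteriorAlgebra.ι ℝ v * ExteriorAlgebra.ι ℝ w

/-- Y₁ = (η+ζ) e₁ + e₄ + ξ e₃ -/
noncomputable def Y1 (ξ η ζ : ℝ) : V4 := (η + ζ) • e 0 + e 3 + ξ • e 2
/-- Y₂ = −ξ e₁ + e₂ + (η−ζ) e₃ -/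
noncomputable def Y2 (ξ η ζ : ℝ) : V4 := -ξ • e 0 + e 1 + (η - ζ) • e 2

/-- the bivector Y(ξ,η,ζ) = Y₁ ∧ Y₂ representing a Lagrangian plane -/
noncomputable def bivLag (ξ η ζ : ℝ) : ExteriorAlgebra ℝ V4 :=
  w (Y1 ξ η ζ) (Y2 ξ η ζ)

noncomputable abbrev B : Module.Basis (Fin 4) ℝ V4 := Pi.basisFun ℝ (Fin 4)

lemma ιMulti_eq_det_smul (v : Fin 4 → V4) :
    ExteriorAlgebra.ιMulti ℝ 4 v = B.det v • ExteriorAlgebra.ιMulti ℝ 4 ⇑B := by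
  have h : (ExteriorAlgebra.ιMulti ℝ 4 (M := V4)) =
      (B.det).smulRight (ExteriorAlgebra.ιMulti ℝ 4 ⇑B) := by
    refine Module.Basis.ext_alternating B fun i h => ?_
    let σ : Equiv.Perm (Fin 4) := Equiv.ofBijective i (Finite.injective_iff_bijective.1 h)
    change (ExteriorAlgebra.ιMulti ℝ 4) (⇑B ∘ σ) =
      B.det (⇑B ∘ σ) • (ExteriorAlgebra.ιMulti ℝ 4) ⇑B
    rw [AlternatingMap.map_perm, AlternatingMap.map_perm, Module.Basis.det_self]; simp
  conv_lhs => rw [h]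
  rfl

lemma quad (v1 v2 v3 v4 : V4) :
    (ExteriorAlgebra.ι ℝ v1 * ExteriorAlgebra.ι ℝ v2) *
    (ExteriorAlgebra.ι ℝ v3 * ExteriorAlgebra.ι ℝ v4) =
      ExteriorAlgebra.ιMulti ℝ 4 ![v1, v2, v3, v4] := by
  simp [ExteriorAlgebra.ιMulti_apply, List.ofFn_succ, mul_assoc]


noncomputable def fdet : ∀ n : ℕ, (V4 [⋀^Fin n]→ₗ[ℝ] ℝ)
  | 4 => B.det
  | _ => 0

lemma eB : ⇑B = e := by
  funext i
  simp [e, B, Pi.basisFun_apply]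

lemma topne : ExteriorAlgebra.ιMulti ℝ 4 ⇑B ≠ 0 := by
  intro h
  have := congrArg (ExteriorAlgebra.liftAlternating fdet) h
  rw [ExteriorAlgebra.liftAlternating_apply_ιMulti, map_zero,
    show fdet 4 = B.det from rfl, Module.Basis.det_self] at this
  exact one_ne_zero this

/-- Y(ξ,η,ζ) ∧ Y(ξ+dξ,η+dη,ζ+dζ) = ((dη)²+(dξ)²−(dζ)²) e₁∧e₂∧e₃∧e₄;
    consequently the two Lagrangian planes intersect in a line (the wedge vanishes)
    iff (dξ)² + (dη)² − (dζ)² = 0. -/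
theorem lagrangian_planes_incidence (ξ η ζ dξ dη dζ : ℝ) :
    bivLag ξ η ζ * bivLag (ξ + dξ) (η + dη) (ζ + dζ) =
      (dη ^ 2 + dξ ^ 2 - dζ ^ 2) •
        (ExteriorAlgebra.ι ℝ (e 0) * ExteriorAlgebra.ι ℝ (e 1) *
         ExteriorAlgebra.ι ℝ (e 2) * ExteriorAlgebra.ι ℝ (e 3)) ∧
    (bivLag ξ η ζ * bivLag (ξ + dξ) (η + dη) (ζ + dζ) = 0 ↔
      dξ ^ 2 + dη ^ 2 - dζ ^ 2 = 0) := by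
  have hE : ExteriorAlgebra.ι ℝ (e 0) * ExteriorAlgebra.ι ℝ (e 1) *
      ExteriorAlgebra.ι ℝ (e 2) * ExteriorAlgebra.ι ℝ (e 3) =
      ExteriorAlgebra.ιMulti ℝ 4 ⇑B := by
    rw [mul_assoc, quad]
    congr 1
    funext i
    rw [eB]
    fin_cases i <;> rfl
  have hdet : B.det ![Y1 ξ η ζ, Y2 ξ η ζ, Y1 (ξ+dξ) (η+dη) (ζ+dζ),
      Y2 (ξ+dξ) (η+dη) (ζ+dζ)] = dη ^ 2 + dξ ^ 2 - dζ ^ 2 := by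
    rw [Module.Basis.det_apply]
    have hM : B.toMatrix ![Y1 ξ η ζ, Y2 ξ η ζ, Y1 (ξ+dξ) (η+dη) (ζ+dζ),
        Y2 (ξ+dξ) (η+dη) (ζ+dζ)] =
        !![η+ζ, -ξ, (η+dη)+(ζ+dζ), -(ξ+dξ);
           0, 1, 0, 1;
           ξ, η-ζ, ξ+dξ, (η+dη)-(ζ+dζ);
           1, 0, 1, 0] := by
      ext i j
      fin_cases i <;> fin_cases j <;>
        simp [Module.Basis.toMatrix_apply, Pi.basisFun_repr, Y1, Y2, e, Pi.single_apply]
    rw [hM, Matrix.det_succ_row_zero]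
    simp [Fin.sum_univ_succ, Matrix.det_fin_three, Fin.succAbove, Fin.castSucc, Fin.castAdd, Fin.castLE]
    ring
  have hmain : bivLag ξ η ζ * bivLag (ξ + dξ) (η + dη) (ζ + dζ) =
      (dη ^ 2 + dξ ^ 2 - dζ ^ 2) • ExteriorAlgebra.ιMulti ℝ 4 ⇑B := by
    rw [bivLag, bivLag, w, w, quad, ιMulti_eq_det_smul, hdet]
  refine ⟨by rw [hmain, hE], ?_⟩
  rw [hmain, smul_eq_zero]
  constructor
  · rintro (h | h)
    · linarith
    · exact absurd h topne
  · intro h; left; linarith
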